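/- arXiv:1903.10497 — 4 statements merged into one kernel-verified Lean document; each statement's English description precedes it below -/
import Mathlib

section
/- Let θ ∈ (0,1), α > 0, 1 < p < ∞, and w ∈ ℂ, and consider the weight μ(z) = |z - w|^{α(2-p)/θ} on the upper half plane. If p lies in the open interval ((2α + 2θ)/(α + 2θ), (2α + 2θ)/α), then μ belongs to A_p^+(𝕌), with a bound N_D(μ) ≤ C where C is independent of w and of the disk D. -/
open MeasureTheory Metric
open Real

/-- The upper half plane 𝕌 ⊆ ℂ. -/
def upperHalf : Set ℂ := {z : ℂ | 0 < z.im}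

/-- The quantity N_D(μ) for the disk D = D(x,R) centered at x ∈ ℝ, with
conjugate exponent q = p/(p-1). -/
noncomputable def ND (p : ℝ) (μ : ℂ → ℝ) (x R : ℝ) : ℝ :=
  ((1 / (Real.pi * R ^ 2)) * ∫ z in ball (x : ℂ) R ∩ upperHalf, μ z) *
    ((1 / (Real.pi * R ^ 2)) *
        ∫ z in ball (x : ℂ) R ∩ upperHalf, μ z ^ (-((p / (p - 1)) / p))) ^
      (p / (p / (p - 1)))


lemma measurable_rpow_const (γ : ℝ) : Measurable fun x : ℝ => x ^ γ := by
  have h : (fun x : ℝ => x ^ γ) = fun x =>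
      if 0 < x then Real.exp (Real.log x * γ)
      else if x = 0 then (if γ = 0 then 1 else 0)
      else Real.exp (Real.log x * γ) * Real.cos (γ * π) := by
    funext x
    split_ifs with h1 h2 h3
    · exact Real.rpow_def_of_pos h1 γ
    · subst h2; subst h3; simp
    · subst h2; exact Real.zero_rpow h3
    · exact Real.rpow_def_of_neg (lt_of_le_of_ne (not_lt.mp h1) h2) γ
  rw [h]
  refine Measurable.ite (measurableSet_lt measurable_const measurable_id)
    (Real.measurable_exp.comp (Real.measurable_log.mul_const γ)) ?_
  refine Measurable.ite (MeasurableSet.singleton 0) measurable_const ?_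
  exact (Real.measurable_exp.comp (Real.measurable_log.mul_const γ)).mul_const _

lemma meas_integrand (w : ℂ) (γ : ℝ) :
    Measurable fun z : ℂ => ‖z - w‖ ^ γ :=
  (measurable_rpow_const γ).comp
    (continuous_norm.measurable.comp (measurable_id.sub_const w))

lemma vol_ball_complex (a : ℂ) (r : ℝ) (hr : 0 ≤ r) :
    volume (ball a r) = ENNReal.ofReal (π * r ^ 2) := by
  rw [Complex.volume_ball, ENNReal.ofReal_mul Real.pi_pos.le, ← ENNReal.ofReal_pow hr]
  rw [← NNReal.coe_real_pi, ENNReal.ofReal_coe_nnreal, mul_comm]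

lemma ann (γ : ℝ) (h1 : -2 < γ) (h2 : γ < 0) :
    ∃ K > 0, ∀ (w : ℂ) (r : ℝ), 0 < r →
      ∫⁻ z in ball w r, ENNReal.ofReal (‖z - w‖ ^ γ) ≤
        ENNReal.ofReal (K * r ^ (2 + γ)) := by
  set c : ℝ := 1 / 2 with hcdef
  have hc : (0:ℝ) < c := by norm_num
  have hc1 : c < 1 := by norm_num
  set q0 : ℝ := c ^ (2 + γ) with hq0def
  have hq0pos : 0 < q0 := Real.rpow_pos_of_pos hc _
  have hq0lt : q0 < 1 := Real.rpow_lt_one hc.le hc1 (by linarith)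
  have hcγ : (0:ℝ) < c ^ γ := Real.rpow_pos_of_pos hc _
  refine ⟨π * c ^ γ * (1 - q0)⁻¹, mul_pos (mul_pos Real.pi_pos hcγ) (inv_pos.mpr (by linarith)), fun w r hr => ?_⟩
  set A : ℕ → Set ℂ := fun n => ball w (r * c ^ n) \ ball w (r * c ^ (n + 1)) with hA
  have cover : ball w r ⊆ {w} ∪ ⋃ n, A n := by
    intro z hz
    by_cases hzw : z = w
    · exact Or.inl hzw
    right
    have hd0 : 0 < dist z w := dist_pos.mpr hzw
    have hdr : dist z w < r := mem_ball.mp hz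
    have hex : ∃ n : ℕ, r * c ^ (n + 1) ≤ dist z w := by
      obtain ⟨n, hn⟩ := exists_pow_lt_of_lt_one (show 0 < dist z w / r by positivity) hc1
      refine ⟨n, ?_⟩
      have : c ^ (n+1) ≤ c ^ n := pow_le_pow_of_le_one hc.le hc1.le (Nat.le_succ n)
      have h3 : r * c ^ n < dist z w := by
        rw [lt_div_iff₀ hr] at hn; linarith [hn]
      nlinarith
    refine Set.mem_iUnion.mpr ⟨Nat.find hex, ?_, ?_⟩
    · show dist z w < r * c ^ (Nat.find hex)
      rcases Nat.eq_zero_or_pos (Nat.find hex) with h0 | hpos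
      · rw [h0]; simpa using hdr
      · obtain ⟨m, hm⟩ := Nat.exists_eq_succ_of_ne_zero hpos.ne'
        have := Nat.find_min hex (by omega : m < Nat.find hex)
        rw [hm]; exact lt_of_not_ge this
    · show ¬ dist z w < r * c ^ (Nat.find hex + 1)
      exact not_lt.mpr (Nat.find_spec hex)
  have hAn : ∀ n, ∫⁻ z in A n, ENNReal.ofReal (‖z - w‖ ^ γ) ≤
      ENNReal.ofReal ((r * c ^ (n+1)) ^ γ * (π * (r * c ^ n) ^ 2)) := by
    intro n
    have hrc : 0 < r * c ^ (n+1) := by positivity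
    have hmeasA : MeasurableSet (A n) :=
      measurableSet_ball.diff measurableSet_ball
    calc ∫⁻ z in A n, ENNReal.ofReal (‖z - w‖ ^ γ)
        ≤ ∫⁻ _ in A n, ENNReal.ofReal ((r * c ^ (n+1)) ^ γ) := by
          refine setLIntegral_mono' hmeasA fun z hz => ?_
          refine ENNReal.ofReal_le_ofReal ?_
          have hge : r * c ^ (n+1) ≤ ‖z - w‖ := by
            have := hz.2
            rw [mem_ball, Complex.dist_eq] at this
            exact not_lt.mp this
          exact Real.rpow_le_rpow_of_nonpos hrc hge h2.le
      _ = ENNReal.ofReal ((r * c ^ (n+1)) ^ γ) * volume (A n) := setLIntegral_const _ _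
      _ ≤ ENNReal.ofReal ((r * c ^ (n+1)) ^ γ) * volume (ball w (r * c ^ n)) :=
          mul_le_mul_right (measure_mono Set.diff_subset) _
      _ = ENNReal.ofReal ((r * c ^ (n+1)) ^ γ) * ENNReal.ofReal (π * (r * c ^ n) ^ 2) := by
          rw [vol_ball_complex _ _ (by positivity)]
      _ = ENNReal.ofReal ((r * c ^ (n+1)) ^ γ * (π * (r * c ^ n) ^ 2)) := by
          rw [← ENNReal.ofReal_mul (Real.rpow_nonneg hrc.le _)]
  have key : ∀ m : ℕ, ((c:ℝ) ^ m) ^ γ = (c ^ γ) ^ m := fun m => by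
    rw [← Real.rpow_natCast c m, ← Real.rpow_mul hc.le, mul_comm, Real.rpow_mul hc.le,
      Real.rpow_natCast]
  have hT : ∀ n : ℕ, (r * c ^ (n+1)) ^ γ * (π * (r * c ^ n) ^ 2) =
      (π * c ^ γ * (r ^ 2 * r ^ γ)) * q0 ^ n := by
    intro n
    have e1 : (r * c ^ (n+1)) ^ γ = r ^ γ * (c ^ γ) ^ (n+1) := by
      rw [Real.mul_rpow hr.le (by positivity), key]
    have e2 : q0 = c ^ 2 * c ^ γ := by
      rw [hq0def, Real.rpow_add hc, ← Real.rpow_natCast c 2]; norm_num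
    rw [e1, e2]
    ring_nf
  have hrpow : r ^ (2 + γ : ℝ) = r ^ 2 * r ^ γ := by
    rw [Real.rpow_add hr, ← Real.rpow_natCast r 2]; norm_num
  calc ∫⁻ z in ball w r, ENNReal.ofReal (‖z - w‖ ^ γ)
      ≤ ∫⁻ z in ({w} ∪ ⋃ n, A n), ENNReal.ofReal (‖z - w‖ ^ γ) :=
        lintegral_mono_set cover
    _ ≤ (∫⁻ z in ({w} : Set ℂ), ENNReal.ofReal (‖z - w‖ ^ γ)) +
        ∫⁻ z in (⋃ n, A n), ENNReal.ofReal (‖z - w‖ ^ γ) :=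
        lintegral_union_le _ _ _
    _ = ∫⁻ z in (⋃ n, A n), ENNReal.ofReal (‖z - w‖ ^ γ) := by
        rw [setLIntegral_measure_zero _ _ (measure_singleton w), zero_add]
    _ ≤ ∑' n, ∫⁻ z in A n, ENNReal.ofReal (‖z - w‖ ^ γ) :=
        lintegral_iUnion_le _ _
    _ ≤ ∑' n, ENNReal.ofReal ((π * c ^ γ * (r ^ 2 * r ^ γ)) * q0 ^ n) := by
        refine ENNReal.tsum_le_tsum fun n => ?_
        rw [← hT n]; exact hAn n
    _ = ENNReal.ofReal (∑' n, (π * c ^ γ * (r ^ 2 * r ^ γ)) * q0 ^ n) := by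
        rw [ENNReal.ofReal_tsum_of_nonneg (fun n => by positivity)
          ((summable_geometric_of_lt_one hq0pos.le hq0lt).mul_left _)]
    _ = ENNReal.ofReal (π * c ^ γ * (1 - q0)⁻¹ * r ^ (2 + γ)) := by
        rw [tsum_mul_left, tsum_geometric_of_lt_one hq0pos.le hq0lt, hrpow]
        ring_nf

lemma lint_bound (γ : ℝ) (h1 : -2 < γ) :
    ∃ C > 0, ∀ (w z₀ : ℂ) (R : ℝ), 0 < R →
      ∫⁻ z in ball z₀ R, ENNReal.ofReal (‖z - w‖ ^ γ) ≤
        ENNReal.ofReal (C * (R ^ 2 * max R (dist z₀ w) ^ γ)) := by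
  by_cases hγ : 0 ≤ γ
  · refine ⟨π * 2 ^ γ, by positivity, fun w z₀ R hR => ?_⟩
    set M := max R (dist z₀ w) with hMdef
    have hM : 0 < M := lt_max_of_lt_left hR
    have hpt : ∀ z ∈ ball z₀ R, ‖z - w‖ ^ γ ≤ (2 * M) ^ γ := by
      intro z hz
      refine Real.rpow_le_rpow (norm_nonneg _) ?_ hγ
      have h2 : ‖z - w‖ = dist z w := (Complex.dist_eq z w).symm
      have h3 : dist z w ≤ dist z z₀ + dist z₀ w := dist_triangle z z₀ w
      have h4 : dist z z₀ < R := mem_ball.mp hz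
      have h5 : R ≤ M := le_max_left _ _
      have h6 : dist z₀ w ≤ M := le_max_right _ _
      rw [h2]; linarith
    calc ∫⁻ z in ball z₀ R, ENNReal.ofReal (‖z - w‖ ^ γ)
        ≤ ∫⁻ _ in ball z₀ R, ENNReal.ofReal ((2 * M) ^ γ) :=
          setLIntegral_mono' measurableSet_ball fun z hz =>
            ENNReal.ofReal_le_ofReal (hpt z hz)
      _ = ENNReal.ofReal ((2 * M) ^ γ) * volume (ball z₀ R) := setLIntegral_const _ _
      _ = ENNReal.ofReal ((2 * M) ^ γ * (π * R ^ 2)) := by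
          rw [vol_ball_complex _ _ hR.le,
            ← ENNReal.ofReal_mul (Real.rpow_nonneg (by positivity) _)]
      _ ≤ ENNReal.ofReal (π * 2 ^ γ * (R ^ 2 * M ^ γ)) := by
          refine ENNReal.ofReal_le_ofReal (le_of_eq ?_)
          rw [Real.mul_rpow (by norm_num) hM.le]
          ring
  · push_neg at hγ
    obtain ⟨K, hK, hKb⟩ := ann γ h1 hγ
    have h2γ : (0:ℝ) < 2 ^ (-γ) := Real.rpow_pos_of_pos (by norm_num) _
    have h3γ : (0:ℝ) < 3 ^ (2+γ) := Real.rpow_pos_of_pos (by norm_num) _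
    refine ⟨π * 2 ^ (-γ) + K * 3 ^ (2+γ) * 2 ^ (-γ), by positivity, fun w z₀ R hR => ?_⟩
    set d := dist z₀ w with hddef
    set M := max R d with hMdef
    have hM : 0 < M := lt_max_of_lt_left hR
    have hMγ : (0:ℝ) < M ^ γ := Real.rpow_pos_of_pos hM _
    by_cases hfar : 2 * R ≤ d
    · have hMd : M = d := max_eq_right (by linarith)
      have hpt : ∀ z ∈ ball z₀ R, ‖z - w‖ ^ γ ≤ (M / 2) ^ γ := by
        intro z hz
        refine Real.rpow_le_rpow_of_nonpos (by positivity) ?_ hγ.le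
        have h2 : ‖z - w‖ = dist z w := (Complex.dist_eq z w).symm
        have h3 : d ≤ dist z z₀ + dist z w := dist_triangle z₀ z w |>.trans_eq (by rw [dist_comm z₀ z])
        have h4 : dist z z₀ < R := mem_ball.mp hz
        rw [h2, hMd]; linarith
      calc ∫⁻ z in ball z₀ R, ENNReal.ofReal (‖z - w‖ ^ γ)
          ≤ ∫⁻ _ in ball z₀ R, ENNReal.ofReal ((M / 2) ^ γ) :=
            setLIntegral_mono' measurableSet_ball fun z hz =>
              ENNReal.ofReal_le_ofReal (hpt z hz)
        _ = ENNReal.ofReal ((M / 2) ^ γ) * volume (ball z₀ R) := setLIntegral_const _ _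
        _ = ENNReal.ofReal ((M / 2) ^ γ * (π * R ^ 2)) := by
            rw [vol_ball_complex _ _ hR.le,
              ← ENNReal.ofReal_mul (Real.rpow_nonneg (by positivity) _)]
        _ ≤ ENNReal.ofReal ((π * 2 ^ (-γ) + K * 3 ^ (2+γ) * 2 ^ (-γ)) * (R ^ 2 * M ^ γ)) := by
            refine ENNReal.ofReal_le_ofReal ?_
            have e1 : (M / 2) ^ γ = M ^ γ * 2 ^ (-γ) := by
              rw [Real.div_rpow hM.le (by norm_num), Real.rpow_neg (by norm_num)]
              ring
            rw [e1]
            have : (0:ℝ) ≤ K * 3 ^ (2+γ) * 2 ^ (-γ) * (R ^ 2 * M ^ γ) := by positivity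
            nlinarith [Real.pi_pos, sq_nonneg R]
    · push_neg at hfar
      have hsub : ball z₀ R ⊆ ball w (3 * R) := by
        intro z hz
        have h4 : dist z z₀ < R := mem_ball.mp hz
        have h3 : dist z w ≤ dist z z₀ + d := dist_triangle z z₀ w
        rw [mem_ball]; linarith
      have hMle : M ≤ 2 * R := max_le (by linarith) hfar.le
      have hRγ : R ^ γ ≤ 2 ^ (-γ) * M ^ γ := by
        have h5 : (2 * R) ^ γ ≤ M ^ γ := Real.rpow_le_rpow_of_nonpos hM hMle hγ.le
        have h6 : (2 * R) ^ γ = 2 ^ γ * R ^ γ := Real.mul_rpow (by norm_num) hR.le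
        have h7 : (0:ℝ) < 2 ^ γ := Real.rpow_pos_of_pos (by norm_num) _
        have h8 : (2:ℝ) ^ (-γ) * 2 ^ γ = 1 := by
          rw [← Real.rpow_add (by norm_num)]; simp
        calc R ^ γ = 2 ^ (-γ) * (2 ^ γ * R ^ γ) := by
              rw [← mul_assoc, h8, one_mul]
          _ ≤ 2 ^ (-γ) * M ^ γ := by
              rw [← h6]; exact mul_le_mul_of_nonneg_left h5 h2γ.le
      calc ∫⁻ z in ball z₀ R, ENNReal.ofReal (‖z - w‖ ^ γ)
          ≤ ∫⁻ z in ball w (3 * R), ENNReal.ofReal (‖z - w‖ ^ γ) :=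
            lintegral_mono_set hsub
        _ ≤ ENNReal.ofReal (K * (3 * R) ^ (2 + γ)) := hKb w (3 * R) (by linarith)
        _ ≤ ENNReal.ofReal ((π * 2 ^ (-γ) + K * 3 ^ (2+γ) * 2 ^ (-γ)) * (R ^ 2 * M ^ γ)) := by
            refine ENNReal.ofReal_le_ofReal ?_
            have e1 : (3 * R) ^ (2 + γ : ℝ) = 3 ^ (2+γ) * (R ^ 2 * R ^ γ) := by
              rw [Real.mul_rpow (by norm_num) hR.le, Real.rpow_add hR,
                ← Real.rpow_natCast R 2]
              norm_num
            rw [e1]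
            have h9 : K * 3 ^ (2+γ) * (R ^ 2 * R ^ γ) ≤
                K * 3 ^ (2+γ) * (R ^ 2 * (2 ^ (-γ) * M ^ γ)) := by
              have := mul_le_mul_of_nonneg_left hRγ (sq_nonneg R)
              have h10 : (0:ℝ) ≤ K * 3 ^ (2+γ) := by positivity
              nlinarith
            have h11 : (0:ℝ) ≤ π * 2 ^ (-γ) * (R ^ 2 * M ^ γ) := by positivity
            nlinarith

lemma setint_le (w : ℂ) (γ : ℝ) (S : Set ℂ) (B : ℝ) (hB : 0 ≤ B)
    (h : ∫⁻ z in S, ENNReal.ofReal (‖z - w‖ ^ γ) ≤ ENNReal.ofReal B) :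
    ∫ z in S, ‖z - w‖ ^ γ ≤ B := by
  rw [integral_eq_lintegral_of_nonneg_ae
    (ae_of_all _ fun z => Real.rpow_nonneg (norm_nonneg _) _)
    ((meas_integrand w γ).aestronglyMeasurable)]
  exact ENNReal.toReal_le_of_le_ofReal hB h

/-- Let θ ∈ (0,1), α > 0, 1 < p < ∞, and consider the weight
μ(z) = |z-w|^{α(2-p)/θ}.  If p ∈ ((2α+2θ)/(α+2θ), (2α+2θ)/α), then
μ ∈ A_p^+(𝕌) with a bound N_D(μ) ≤ C independent of w and of the disk D. -/
theorem weight_mu1_in_Ap_plus (θ α p : ℝ) (hθ : θ ∈ Set.Ioo (0 : ℝ) 1)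
    (hα : 0 < α) (hp1 : 1 < p)
    (hp : p ∈ Set.Ioo ((2 * α + 2 * θ) / (α + 2 * θ)) ((2 * α + 2 * θ) / α)) :
    ∃ C > 0, ∀ w : ℂ, ∀ x R : ℝ, 0 < R →
      ND p (fun z => ‖z - w‖ ^ (α * (2 - p) / θ)) x R ≤ C := by
  obtain ⟨hθ0, hθ1⟩ := hθ
  obtain ⟨hpl, hpu⟩ := hp
  have hp0 : (0:ℝ) < p := by linarith
  have hpm1 : (0:ℝ) < p - 1 := by linarith
  set γ₁ : ℝ := α * (2 - p) / θ with hγ₁def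
  set e : ℝ := -(p / (p - 1) / p) with hedef
  set γ₂ : ℝ := γ₁ * e with hγ₂def
  have hq : p / (p - 1) / p = 1 / (p - 1) := by
    field_simp
  have hγ₁ : -2 < γ₁ := by
    have h1 : p * α < 2 * α + 2 * θ := (lt_div_iff₀ hα).mp hpu
    rw [hγ₁def, lt_div_iff₀ hθ0]
    nlinarith
  have hγ₂ : -2 < γ₂ := by
    have h1 : 2 * α + 2 * θ < p * (α + 2 * θ) := (div_lt_iff₀ (by linarith)).mp hpl
    have he2 : γ₂ = α * (p - 2) / (θ * (p - 1)) := by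
      rw [hγ₂def, hedef, hq, hγ₁def]
      field_simp
      ring
    rw [he2, lt_div_iff₀ (by positivity)]
    nlinarith
  obtain ⟨C₁, hC₁pos, hC₁⟩ := lint_bound γ₁ hγ₁
  obtain ⟨C₂, hC₂pos, hC₂⟩ := lint_bound γ₂ hγ₂
  refine ⟨(C₁/π) * (C₂/π) ^ (p-1), by positivity, fun w x R hR => ?_⟩
  set M : ℝ := max R (dist (x:ℂ) w) with hMdef
  have hM : 0 < M := lt_max_of_lt_left hR
  have hMγ₁ : (0:ℝ) < M ^ γ₁ := Real.rpow_pos_of_pos hM _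
  have hMγ₂ : (0:ℝ) < M ^ γ₂ := Real.rpow_pos_of_pos hM _
  set S : Set ℂ := ball (x:ℂ) R ∩ upperHalf with hSdef
  have hI₁ : ∫ z in S, ‖z - w‖ ^ γ₁ ≤ C₁ * (R ^ 2 * M ^ γ₁) :=
    setint_le w γ₁ S _ (by positivity)
      ((lintegral_mono_set Set.inter_subset_left).trans (hC₁ w x R hR))
  have hI₂ : ∫ z in S, ‖z - w‖ ^ γ₂ ≤ C₂ * (R ^ 2 * M ^ γ₂) :=
    setint_le w γ₂ S _ (by positivity)
      ((lintegral_mono_set Set.inter_subset_left).trans (hC₂ w x R hR))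
  have hI₁0 : 0 ≤ ∫ z in S, ‖z - w‖ ^ γ₁ :=
    integral_nonneg fun z => Real.rpow_nonneg (norm_nonneg _) _
  have hI₂0 : 0 ≤ ∫ z in S, ‖z - w‖ ^ γ₂ :=
    integral_nonneg fun z => Real.rpow_nonneg (norm_nonneg _) _
  have hfun : (fun z : ℂ => (‖z - w‖ ^ γ₁) ^ (-(p / (p - 1) / p))) =
      fun z : ℂ => ‖z - w‖ ^ γ₂ :=
    funext fun z => (Real.rpow_mul (norm_nonneg _) γ₁ e).symm
  have he' : p / (p / (p - 1)) = p - 1 := by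
    field_simp
  have hπR : (0:ℝ) < π * R ^ 2 := by positivity
  have h1πR : (0:ℝ) ≤ 1 / (π * R ^ 2) := by positivity
  simp only [ND]
  rw [hfun, he']
  set I₁ := ∫ z in S, ‖z - w‖ ^ γ₁
  set I₂ := ∫ z in S, ‖z - w‖ ^ γ₂
  have eq₁ : 1 / (π * R ^ 2) * (C₁ * (R ^ 2 * M ^ γ₁)) = C₁ / π * M ^ γ₁ := by
    field_simp
  have eq₂ : 1 / (π * R ^ 2) * (C₂ * (R ^ 2 * M ^ γ₂)) = C₂ / π * M ^ γ₂ := by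
    field_simp
  have ha₁ : 1 / (π * R ^ 2) * I₁ ≤ C₁ / π * M ^ γ₁ := by
    rw [← eq₁]; exact mul_le_mul_of_nonneg_left hI₁ h1πR
  have ha₂ : 1 / (π * R ^ 2) * I₂ ≤ C₂ / π * M ^ γ₂ := by
    rw [← eq₂]; exact mul_le_mul_of_nonneg_left hI₂ h1πR
  have ha₁0 : 0 ≤ 1 / (π * R ^ 2) * I₁ := mul_nonneg h1πR hI₁0
  have ha₂0 : 0 ≤ 1 / (π * R ^ 2) * I₂ := mul_nonneg h1πR hI₂0
  have hb₁0 : (0:ℝ) ≤ C₁ / π * M ^ γ₁ := by positivity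
  have hstep : (1 / (π * R ^ 2) * I₁) * (1 / (π * R ^ 2) * I₂) ^ (p - 1) ≤
      (C₁ / π * M ^ γ₁) * (C₂ / π * M ^ γ₂) ^ (p - 1) := by
    refine mul_le_mul ha₁ (Real.rpow_le_rpow ha₂0 ha₂ hpm1.le) ?_ hb₁0
    exact Real.rpow_nonneg ha₂0 _
  refine hstep.trans (le_of_eq ?_)
  have hexp : γ₁ + γ₂ * (p - 1) = 0 := by
    rw [hγ₂def, hedef, hq]
    field_simp
    ring
  rw [Real.mul_rpow (by positivity) hMγ₂.le, ← Real.rpow_mul hM.le]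
  have : C₁ / π * M ^ γ₁ * ((C₂ / π) ^ (p-1) * M ^ (γ₂ * (p-1))) =
      (C₁/π) * (C₂/π) ^ (p-1) * (M ^ γ₁ * M ^ (γ₂ * (p-1))) := by ring
  rw [this, ← Real.rpow_add hM, hexp, Real.rpow_zero, mul_one]
end

section
/- Let D = D(x,R) be a disk with x real, w ∈ ℂ with |x - w| ≥ 10R, and μ(z) = |z - w|^s for some real exponent s. Then N_D(μ) ≤ (1/2)^{(p+q)/q} · (11/9)^{|s|}, a bound independent of w, x, R. -/
open MeasureTheory Metric

lemma measurableSet_upperHalf : MeasurableSet upperHalf :=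
  measurableSet_lt measurable_const Complex.measurable_im

lemma vol_half (x R : ℝ) (hR : 0 < R) :
    (volume (ball (x : ℂ) R ∩ upperHalf)).toReal ≤ Real.pi * R ^ 2 / 2 := by
  set E := ball (x : ℂ) R ∩ upperHalf with hE
  set F := ball (x : ℂ) R ∩ {z : ℂ | z.im < 0} with hF
  have hEm : MeasurableSet E := measurableSet_ball.inter measurableSet_upperHalf
  have hFm : MeasurableSet F :=
    measurableSet_ball.inter (measurableSet_lt Complex.measurable_im measurable_const)
  have hpre : (Complex.conjLIE : ℂ → ℂ) ⁻¹' E = F := by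
    ext z
    simp only [hE, hF, Set.mem_preimage, Set.mem_inter_iff, mem_ball, upperHalf,
      Set.mem_setOf_eq, Complex.conjLIE_apply]
    have h1 : dist ((starRingEnd ℂ) z) (x : ℂ) = dist z x := by
      conv_lhs => rw [← Complex.conj_ofReal x]
      exact Complex.dist_conj_conj z x
    rw [h1, Complex.conj_im]
    constructor <;> rintro ⟨h2, h3⟩ <;> exact ⟨h2, by linarith⟩
  have hmp := Complex.conjLIE.measurePreserving
  have hvF : volume F = volume E := by
    rw [← hpre, hmp.measure_preimage hEm.nullMeasurableSet]
  have hdisj : Disjoint E F := by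
    refine Set.disjoint_left.mpr ?_
    rintro z ⟨_, h1⟩ ⟨_, h2⟩
    simp only [upperHalf, Set.mem_setOf_eq] at h1 h2
    linarith
  have hsum : volume E + volume F ≤ volume (ball (x : ℂ) R) := by
    rw [← measure_union hdisj hFm]
    exact measure_mono (Set.union_subset Set.inter_subset_left Set.inter_subset_left)
  rw [hvF] at hsum
  have hballne : volume (ball (x : ℂ) R) ≠ ⊤ := by
    rw [Complex.volume_ball]
    exact ENNReal.mul_ne_top (by simp) ENNReal.coe_ne_top
  have hEne : volume E ≠ ⊤ := by
    intro h
    exact hballne (top_le_iff.mp (h ▸ measure_mono (hE ▸ Set.inter_subset_left)))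
  have hball : (volume (ball (x : ℂ) R)).toReal = Real.pi * R ^ 2 := by
    rw [Complex.volume_ball, ENNReal.toReal_mul, ENNReal.toReal_pow,
      ENNReal.toReal_ofReal hR.le, ENNReal.coe_toReal, NNReal.coe_real_pi]
    ring
  have h2 : (volume E).toReal + (volume E).toReal ≤ (volume (ball (x : ℂ) R)).toReal := by
    rw [← ENNReal.toReal_add hEne hEne]
    exact ENNReal.toReal_mono hballne hsum
  rw [hball] at h2
  linarith

lemma integral_bound (w : ℂ) (x R u B : ℝ) (hR : 0 < R) (hB : 0 ≤ B)
    (h : ∀ z ∈ ball (x : ℂ) R ∩ upperHalf, ‖z - w‖ ^ u ≤ B) :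
    ∫ z in ball (x : ℂ) R ∩ upperHalf, ‖z - w‖ ^ u ≤ B * (Real.pi * R ^ 2 / 2) := by
  set E := ball (x : ℂ) R ∩ upperHalf with hE
  have hEm : MeasurableSet E := measurableSet_ball.inter measurableSet_upperHalf
  have hEfin : volume E < ⊤ := by
    refine lt_of_le_of_lt (measure_mono (hE ▸ Set.inter_subset_left)) ?_
    rw [Complex.volume_ball]
    exact ENNReal.mul_lt_top (by simp [ENNReal.pow_lt_top]) ENNReal.coe_lt_top
  have hnorm : ∀ z ∈ E, ‖‖z - w‖ ^ u‖ ≤ B := by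
    intro z hz
    rw [Real.norm_eq_abs, abs_of_nonneg (Real.rpow_nonneg (norm_nonneg _) _)]
    exact h z hz
  calc ∫ z in E, ‖z - w‖ ^ u
      ≤ ‖∫ z in E, ‖z - w‖ ^ u‖ := le_abs_self _
    _ ≤ B * (volume E).toReal := norm_setIntegral_le_of_norm_le_const hEfin hnorm
    _ ≤ B * (Real.pi * R ^ 2 / 2) := mul_le_mul_of_nonneg_left (vol_half x R hR) hB

lemma nd_bound_aux (p q s t x R : ℝ) (w : ℂ) (B₁ B₂ : ℝ) (hp : 1 < p) (hR : 0 < R)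
    (hqp : p / (p / (p - 1)) = p - 1) (hpq : (p + q) / q = p)
    (hB1n : 0 ≤ B₁) (hB2n : 0 ≤ B₂)
    (hfun : (fun z : ℂ => (‖z - w‖ ^ s) ^ (-((p / (p - 1)) / p)))
      = fun z : ℂ => ‖z - w‖ ^ t)
    (hB1 : ∀ z ∈ ball (x : ℂ) R ∩ upperHalf, ‖z - w‖ ^ s ≤ B₁)
    (hB2 : ∀ z ∈ ball (x : ℂ) R ∩ upperHalf, ‖z - w‖ ^ t ≤ B₂)
    (key : B₁ * B₂ ^ (p - 1) ≤ (11 / 9 : ℝ) ^ |s|) :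
    ND p (fun z => ‖z - w‖ ^ s) x R ≤
      (1 / 2 : ℝ) ^ ((p + q) / q) * (11 / 9 : ℝ) ^ |s| := by
  set E := ball (x : ℂ) R ∩ upperHalf with hE
  have hEm : MeasurableSet E := measurableSet_ball.inter measurableSet_upperHalf
  have hpi : 0 < Real.pi * R ^ 2 := by positivity
  have hc : 0 < 1 / (Real.pi * R ^ 2) := by positivity
  have hp1 : (0 : ℝ) ≤ p - 1 := by linarith
  have hI1 : ∫ z in E, ‖z - w‖ ^ s ≤ B₁ * (Real.pi * R ^ 2 / 2) :=
    integral_bound w x R s B₁ hR hB1n hB1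
  have hI2 : ∫ z in E, ‖z - w‖ ^ t ≤ B₂ * (Real.pi * R ^ 2 / 2) :=
    integral_bound w x R t B₂ hR hB2n hB2
  have hI1n : 0 ≤ ∫ z in E, ‖z - w‖ ^ s :=
    setIntegral_nonneg hEm fun z _ => Real.rpow_nonneg (norm_nonneg _) _
  have hI2n : 0 ≤ ∫ z in E, ‖z - w‖ ^ t :=
    setIntegral_nonneg hEm fun z _ => Real.rpow_nonneg (norm_nonneg _) _
  have h1 : (1 / (Real.pi * R ^ 2)) * ∫ z in E, ‖z - w‖ ^ s ≤ B₁ / 2 := by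
    have := mul_le_mul_of_nonneg_left hI1 hc.le
    have heq : (1 / (Real.pi * R ^ 2)) * (B₁ * (Real.pi * R ^ 2 / 2)) = B₁ / 2 := by
      field_simp
    linarith
  have h2 : (1 / (Real.pi * R ^ 2)) * ∫ z in E, ‖z - w‖ ^ t ≤ B₂ / 2 := by
    have := mul_le_mul_of_nonneg_left hI2 hc.le
    have heq : (1 / (Real.pi * R ^ 2)) * (B₂ * (Real.pi * R ^ 2 / 2)) = B₂ / 2 := by
      field_simp
    linarith
  have h2n : 0 ≤ (1 / (Real.pi * R ^ 2)) * ∫ z in E, ‖z - w‖ ^ t :=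
    mul_nonneg hc.le hI2n
  rw [ND, hpq, hqp]
  simp only [← hE]
  rw [hfun]
  have h2r : ((1 / (Real.pi * R ^ 2)) * ∫ z in E, ‖z - w‖ ^ t) ^ (p - 1)
      ≤ (B₂ / 2) ^ (p - 1) := Real.rpow_le_rpow h2n h2 hp1
  have h2rn : 0 ≤ ((1 / (Real.pi * R ^ 2)) * ∫ z in E, ‖z - w‖ ^ t) ^ (p - 1) :=
    Real.rpow_nonneg h2n _
  calc ((1 / (Real.pi * R ^ 2)) * ∫ z in E, ‖z - w‖ ^ s) *
        ((1 / (Real.pi * R ^ 2)) * ∫ z in E, ‖z - w‖ ^ t) ^ (p - 1)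
      ≤ (B₁ / 2) * (B₂ / 2) ^ (p - 1) := mul_le_mul h1 h2r h2rn (by positivity)
    _ = (1 / 2 : ℝ) ^ p * (B₁ * B₂ ^ (p - 1)) := by
        have e1 : (B₂ / 2 : ℝ) = B₂ * (1 / 2) := by ring
        have e2 : (B₂ * (1 / 2) : ℝ) ^ (p - 1) = B₂ ^ (p - 1) * (1 / 2 : ℝ) ^ (p - 1) :=
          Real.mul_rpow hB2n (by norm_num)
        have e3 : (1 / 2 : ℝ) ^ p = (1 / 2 : ℝ) ^ (1 : ℝ) * (1 / 2 : ℝ) ^ (p - 1) := by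
          rw [← Real.rpow_add (by norm_num : (0:ℝ) < 1 / 2)]
          norm_num
        rw [e1, e2, e3, Real.rpow_one]
        ring
    _ ≤ (1 / 2 : ℝ) ^ p * (11 / 9 : ℝ) ^ |s| :=
        mul_le_mul_of_nonneg_left key (Real.rpow_nonneg (by norm_num) _)

/-- For the disk D = D(x,R) with x real and w ∈ ℂ with |x-w| ≥ 10R, the weight
μ(z) = |z-w|^s satisfies N_D(μ) ≤ (1/2)^{(p+q)/q} (11/9)^{|s|}, a bound
independent of w, x, R.  Here q = p/(p-1) is the conjugate exponent of p. -/
theorem ND_far_disk_bound (p q s x R : ℝ) (w : ℂ) (hp : 1 < p)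
    (hq : q = p / (p - 1)) (hR : 0 < R)
    (hfar : 10 * R ≤ ‖(x : ℂ) - w‖) :
    ND p (fun z => ‖z - w‖ ^ s) x R ≤
      (1 / 2 : ℝ) ^ ((p + q) / q) * (11 / 9 : ℝ) ^ |s| := by
  have hp0 : (0 : ℝ) < p := by linarith
  have hp1 : (0 : ℝ) < p - 1 := by linarith
  set L : ℝ := ‖(x : ℂ) - w‖ with hL
  have ha : 0 < L - R := by linarith
  have hb : 0 < L + R := by linarith
  have hba : (L + R) / (L - R) ≤ 11 / 9 := by
    rw [div_le_div_iff₀ ha (by norm_num)]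
    linarith
  have hba1 : (0 : ℝ) ≤ (L + R) / (L - R) := le_of_lt (div_pos hb ha)
  have habs : ∀ z ∈ ball (x : ℂ) R ∩ upperHalf,
      L - R ≤ ‖z - w‖ ∧ ‖z - w‖ ≤ L + R := by
    rintro z ⟨hz, -⟩
    rw [mem_ball, Complex.dist_eq] at hz
    have h1 : L ≤ ‖(x : ℂ) - z‖ + ‖z - w‖ :=
      norm_sub_le_norm_sub_add_norm_sub (x : ℂ) z w
    have h2 : ‖z - w‖ ≤ ‖z - (x : ℂ)‖ + ‖(x : ℂ) - w‖ :=
      norm_sub_le_norm_sub_add_norm_sub z (x : ℂ) w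
    have h3 : ‖(x : ℂ) - z‖ = ‖z - (x : ℂ)‖ := by
      rw [← norm_neg, neg_sub]
    rw [h3] at h1
    exact ⟨by linarith, by linarith⟩
  set t : ℝ := s * (-((p / (p - 1)) / p)) with ht
  have htval : t * (p - 1) = -s := by
    rw [ht]
    field_simp
  have hqp : p / (p / (p - 1)) = p - 1 := by
    rw [div_div_eq_mul_div, mul_comm, mul_div_assoc, div_self hp0.ne', mul_one]
  have hpq : (p + q) / q = p := by
    rw [hq]
    rw [div_eq_iff (by positivity : p / (p - 1) ≠ 0)]
    field_simp
    ring
  have hfun : (fun z : ℂ => (‖z - w‖ ^ s) ^ (-((p / (p - 1)) / p)))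
      = fun z : ℂ => ‖z - w‖ ^ t := by
    funext z
    rw [ht, ← Real.rpow_mul (norm_nonneg _)]
  obtain hs | hs := le_or_gt 0 s
  · have hts : t ≤ 0 := by
      rw [ht]
      apply mul_nonpos_of_nonneg_of_nonpos hs
      rw [neg_nonpos]
      positivity
    have hB1 : ∀ z ∈ ball (x : ℂ) R ∩ upperHalf,
        ‖z - w‖ ^ s ≤ (L + R) ^ s := fun z hz =>
      Real.rpow_le_rpow (norm_nonneg _) (habs z hz).2 hs
    have hB2 : ∀ z ∈ ball (x : ℂ) R ∩ upperHalf,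
        ‖z - w‖ ^ t ≤ (L - R) ^ t := fun z hz =>
      Real.rpow_le_rpow_of_nonpos ha (habs z hz).1 hts
    have key : (L + R) ^ s * ((L - R) ^ t) ^ (p - 1) ≤ (11 / 9 : ℝ) ^ |s| := by
      have e1 : ((L - R) ^ t) ^ (p - 1) = (L - R) ^ (-s) := by
        rw [← Real.rpow_mul ha.le, htval]
      rw [e1, abs_of_nonneg hs]
      calc (L + R) ^ s * (L - R) ^ (-s) = ((L + R) / (L - R)) ^ s := by
            rw [Real.div_rpow hb.le ha.le, Real.rpow_neg ha.le, div_eq_mul_inv]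
        _ ≤ (11 / 9 : ℝ) ^ s := Real.rpow_le_rpow hba1 hba hs
    exact nd_bound_aux p q s t x R w ((L + R) ^ s) ((L - R) ^ t) hp hR hqp hpq
      (Real.rpow_nonneg hb.le s) (Real.rpow_nonneg ha.le t) hfun hB1 hB2 key
  · have hts : 0 ≤ t := by
      rw [ht]
      have h0 : (0:ℝ) ≤ p / (p - 1) / p := by positivity
      nlinarith
    have hB1 : ∀ z ∈ ball (x : ℂ) R ∩ upperHalf,
        ‖z - w‖ ^ s ≤ (L - R) ^ s := fun z hz =>
      Real.rpow_le_rpow_of_nonpos ha (habs z hz).1 hs.le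
    have hB2 : ∀ z ∈ ball (x : ℂ) R ∩ upperHalf,
        ‖z - w‖ ^ t ≤ (L + R) ^ t := fun z hz =>
      Real.rpow_le_rpow (norm_nonneg _) (habs z hz).2 hts
    have key : (L - R) ^ s * ((L + R) ^ t) ^ (p - 1) ≤ (11 / 9 : ℝ) ^ |s| := by
      have e1 : ((L + R) ^ t) ^ (p - 1) = (L + R) ^ (-s) := by
        rw [← Real.rpow_mul hb.le, htval]
      rw [e1, abs_of_neg hs]
      calc (L - R) ^ s * (L + R) ^ (-s) = ((L + R) / (L - R)) ^ (-s) := by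
            rw [Real.div_rpow hb.le ha.le, Real.rpow_neg ha.le s, div_inv_eq_mul]
            ring
        _ ≤ (11 / 9 : ℝ) ^ (-s) := Real.rpow_le_rpow hba1 hba (by linarith)
    exact nd_bound_aux p q s t x R w ((L - R) ^ s) ((L + R) ^ t) hp hR hqp hpq
      (Real.rpow_nonneg ha.le s) (Real.rpow_nonneg hb.le t) hfun hB1 hB2 key
end

section
/- The power series identity Σ_{j,k≥0} (j+1)(k+1) xʲ yᵏ = 1/((1−x)²(1−y)²) holds for |x| < 1, |y| < 1, and consequently the Bergman kernel of the weighted symmetric Bergman space A²(𝔻², ν) ∩ 𝕀^τ(𝔻²) with ν(z) = |z₁−z₂|² is B_ν(z,ζ) = (1/(2π²)) · (1/((z₁−z₂)(ζ̄₁−ζ̄₂))) · [1/((1−z₁ζ̄₁)²(1−z₂ζ̄₂)²) − 1/((1−z₁ζ̄₂)²(1−z₂ζ̄₁)²)]. -/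
set_option maxHeartbeats 1000000

open MeasureTheory Metric

/-- The unit bidisk 𝔻² ⊆ ℂ². -/
def biDisk : Set (ℂ × ℂ) := (ball (0 : ℂ) 1) ×ˢ (ball (0 : ℂ) 1)

/-- The orthonormal basis element e_{j,k} of A²(𝔻²,ν) ∩ 𝕀^τ(𝔻²), j > k. -/
noncomputable def basisElt (j k : ℕ) (z : ℂ × ℂ) : ℂ :=
  (Real.sqrt (((k + 1) * (j + 1)) / (2 * Real.pi ^ 2)) : ℂ) *
    (z.1 ^ j * z.2 ^ k - z.1 ^ k * z.2 ^ j) / (z.1 - z.2)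

lemma aux_one_dim {𝕜 : Type*} [NormedField 𝕜] [CompleteSpace 𝕜] {x : 𝕜} (hx : ‖x‖ < 1) :
    HasSum (fun n : ℕ => ((n : 𝕜) + 1) * x ^ n) (1 / (1 - x) ^ 2) := by
  have h1 := hasSum_coe_mul_geometric_of_norm_lt_one hx
  have h2 := hasSum_geometric_of_norm_lt_one hx
  have hne : (1 : 𝕜) - x ≠ 0 := by
    intro h
    rw [sub_eq_zero] at h
    rw [← h] at hx
    simp at hx
  have := h1.add h2
  convert this using 1
  · ext n; ring
  · field_simp; ring

lemma aux_norm_summable {x : ℂ} (hx : ‖x‖ < 1) :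
    Summable (fun n : ℕ => ‖((n : ℂ) + 1) * x ^ n‖) := by
  have h : HasSum (fun n : ℕ => ((n : ℝ) + 1) * ‖x‖ ^ n) (1 / (1 - ‖x‖) ^ 2) :=
    aux_one_dim (by simpa using hx)
  refine h.summable.congr fun n => ?_
  rw [norm_mul, norm_pow]
  congr 1
  have : ((n : ℂ) + 1) = ((n + 1 : ℕ) : ℂ) := by push_cast; ring
  rw [this, Complex.norm_natCast]
  push_cast; ring

lemma aux_prod2 {x y : ℂ} (hx : ‖x‖ < 1) (hy : ‖y‖ < 1) :
    HasSum (fun jk : ℕ × ℕ => ((jk.1 + 1) * (jk.2 + 1) : ℂ) * x ^ jk.1 * y ^ jk.2)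
      (1 / ((1 - x) ^ 2 * (1 - y) ^ 2)) := by
  have hs : Summable (fun jk : ℕ × ℕ =>
      (((jk.1 : ℂ) + 1) * x ^ jk.1) * (((jk.2 : ℂ) + 1) * y ^ jk.2)) :=
    summable_mul_of_summable_norm
      (f := fun n : ℕ => ((n : ℂ) + 1) * x ^ n) (g := fun n : ℕ => ((n : ℂ) + 1) * y ^ n)
      (aux_norm_summable hx) (aux_norm_summable hy)
  have h := (aux_one_dim hx).mul (aux_one_dim hy) hs
  have hfun : (fun jk : ℕ × ℕ => ((jk.1 + 1) * (jk.2 + 1) : ℂ) * x ^ jk.1 * y ^ jk.2)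
      = fun jk : ℕ × ℕ => (((jk.1 : ℂ) + 1) * x ^ jk.1) * (((jk.2 : ℂ) + 1) * y ^ jk.2) := by
    funext jk; push_cast; ring
  rw [hfun]
  rw [div_mul_div_comm, one_mul] at h
  exact h

lemma aux_offdiag {f : ℕ × ℕ → ℂ} {T : ℂ} (hf : HasSum f T) (hd : ∀ n : ℕ, f (n, n) = 0) :
    HasSum (fun q : {q : ℕ × ℕ // q.2 < q.1} => f q.1 + f (q.1.2, q.1.1)) T := by
  set s : Set (ℕ × ℕ) := {q | q.2 < q.1} with hs
  set s' : Set (ℕ × ℕ) := {q | q.1 < q.2} with hs'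
  have hsub1 : Summable (f ∘ ((↑) : s → ℕ × ℕ)) := hf.summable.subtype s
  have hsub2 : Summable (f ∘ ((↑) : s' → ℕ × ℕ)) := hf.summable.subtype s'
  obtain ⟨S₁, h1⟩ := hsub1
  obtain ⟨S₂, h2⟩ := hsub2
  let e : {q : ℕ × ℕ // q.2 < q.1} ≃ s' :=
    { toFun := fun q => ⟨(q.1.2, q.1.1), q.2⟩
      invFun := fun q => ⟨(q.1.2, q.1.1), q.2⟩
      left_inv := fun q => by ext <;> rfl
      right_inv := fun q => by ext <;> rfl }
  have h2' : HasSum (fun q : {q : ℕ × ℕ // q.2 < q.1} => f (q.1.2, q.1.1)) S₂ := by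
    have h := (Equiv.hasSum_iff e).mpr h2
    have heq : (f ∘ Subtype.val) ∘ ⇑e = fun q : {q : ℕ × ℕ // q.2 < q.1} => f (q.1.2, q.1.1) := by
      funext q; rfl
    rwa [heq] at h
  have h1' : HasSum (fun q : {q : ℕ × ℕ // q.2 < q.1} => f q.1) S₁ := h1
  have key : S₁ + S₂ = T := by
    have i1 : HasSum (s.indicator f) S₁ := (hasSum_subtype_iff_indicator).mp h1
    have i2 : HasSum (s'.indicator f) S₂ := (hasSum_subtype_iff_indicator).mp h2
    have hfe : f = fun q => s.indicator f q + s'.indicator f q := by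
      funext q
      rcases lt_trichotomy q.1 q.2 with h | h | h
      · rw [Set.indicator_of_notMem (by simp [hs, not_lt, le_of_lt h]),
          Set.indicator_of_mem (by exact h)]
        simp
      · rw [Set.indicator_of_notMem (by simp [hs, h]),
          Set.indicator_of_notMem (by simp [hs', h])]
        have hq : q = (q.1, q.1) := by
          ext
          · rfl
          · exact h.symm
        rw [hq, hd q.1]
        simp
      · rw [Set.indicator_of_mem (by exact h),
          Set.indicator_of_notMem (by simp [hs', not_lt, le_of_lt h])]
        simp
    have h12 := i1.add i2
    rw [← hfe] at h12
    exact (hf.unique h12).symm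
  have := h1'.add h2'
  rwa [key] at this

lemma aux_pointwise (j k : ℕ) (a b c d : ℂ) (hab : a - b ≠ 0) (hcd : c - d ≠ 0) :
    ((Real.sqrt (((k + 1) * (j + 1)) / (2 * Real.pi ^ 2)) : ℂ) *
        (a ^ j * b ^ k - a ^ k * b ^ j) / (a - b)) *
      ((Real.sqrt (((k + 1) * (j + 1)) / (2 * Real.pi ^ 2)) : ℂ) *
        (c ^ j * d ^ k - c ^ k * d ^ j) / (c - d)) =
    ((1 : ℂ) / ((2 * Real.pi ^ 2 : ℝ) : ℂ)) * (1 / ((a - b) * (c - d))) *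
      ((((j : ℂ) + 1) * ((k : ℂ) + 1) * (a * c) ^ j * (b * d) ^ k -
          ((j : ℂ) + 1) * ((k : ℂ) + 1) * (a * d) ^ j * (b * c) ^ k) +
        (((k : ℂ) + 1) * ((j : ℂ) + 1) * (a * c) ^ k * (b * d) ^ j -
          ((k : ℂ) + 1) * ((j : ℂ) + 1) * (a * d) ^ k * (b * c) ^ j)) := by
  have hπ : (Real.pi : ℂ) ≠ 0 := by
    exact_mod_cast Complex.ofReal_ne_zero.mpr Real.pi_ne_zero
  have hR : (0 : ℝ) ≤ ((k + 1) * (j + 1)) / (2 * Real.pi ^ 2) := by positivity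
  have hs : (Real.sqrt (((k + 1) * (j + 1)) / (2 * Real.pi ^ 2)) : ℂ) *
      (Real.sqrt (((k + 1) * (j + 1)) / (2 * Real.pi ^ 2)) : ℂ) =
      ((((k : ℂ) + 1) * ((j : ℂ) + 1)) / (2 * (Real.pi : ℂ) ^ 2)) := by
    rw [← Complex.ofReal_mul, Real.mul_self_sqrt hR]
    push_cast
    ring
  have expand : ((Real.sqrt (((k + 1) * (j + 1)) / (2 * Real.pi ^ 2)) : ℂ) *
        (a ^ j * b ^ k - a ^ k * b ^ j) / (a - b)) *
      ((Real.sqrt (((k + 1) * (j + 1)) / (2 * Real.pi ^ 2)) : ℂ) *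
        (c ^ j * d ^ k - c ^ k * d ^ j) / (c - d)) =
      ((Real.sqrt (((k + 1) * (j + 1)) / (2 * Real.pi ^ 2)) : ℂ) *
        (Real.sqrt (((k + 1) * (j + 1)) / (2 * Real.pi ^ 2)) : ℂ)) *
        (((a ^ j * b ^ k - a ^ k * b ^ j) * (c ^ j * d ^ k - c ^ k * d ^ j)) /
          ((a - b) * (c - d))) := by
    field_simp
  rw [expand, hs]
  push_cast
  field_simp
  ring

/-- The power series identity Σ_{j,k≥0} (j+1)(k+1) xʲyᵏ = 1/((1−x)²(1−y)²) for
|x|,|y| < 1, and the resulting closed formula for the Bergman kernel of the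
weighted symmetric Bergman space A²(𝔻²,ν) ∩ 𝕀^τ(𝔻²), ν = |z₁−z₂|², obtained by
summing e_{j,k}(z)·conj(e_{j,k}(ζ)) over the orthonormal basis. -/
theorem kernel_series_identity :
    (∀ x y : ℂ, ‖x‖ < 1 → ‖y‖ < 1 →
      HasSum
        (fun jk : ℕ × ℕ =>
          ((jk.1 + 1) * (jk.2 + 1) : ℂ) * x ^ jk.1 * y ^ jk.2)
        (1 / ((1 - x) ^ 2 * (1 - y) ^ 2))) ∧
    (∀ z ∈ biDisk, ∀ ζ ∈ biDisk, z.1 ≠ z.2 → ζ.1 ≠ ζ.2 →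
      HasSum
        (fun jk : {q : ℕ × ℕ // q.2 < q.1} =>
          basisElt jk.1.1 jk.1.2 z * (starRingEnd ℂ) (basisElt jk.1.1 jk.1.2 ζ))
        (((1 : ℂ) / ((2 * Real.pi ^ 2 : ℝ) : ℂ)) *
          (1 / ((z.1 - z.2) * (starRingEnd ℂ) (ζ.1 - ζ.2))) *
          (1 / ((1 - z.1 * (starRingEnd ℂ) ζ.1) ^ 2 *
                (1 - z.2 * (starRingEnd ℂ) ζ.2) ^ 2) -
           1 / ((1 - z.1 * (starRingEnd ℂ) ζ.2) ^ 2 *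
                (1 - z.2 * (starRingEnd ℂ) ζ.1) ^ 2)))) := by
  constructor
  · intro x y hx hy
    exact aux_prod2 (by simpa using hx)
      (by simpa using hy)
  · intro z hz ζ hζ hz12 hζ12
    have hz1 : ‖z.1‖ < 1 := by simpa [mem_ball, dist_zero_right] using hz.1
    have hz2 : ‖z.2‖ < 1 := by simpa [mem_ball, dist_zero_right] using hz.2
    have hζ1 : ‖(starRingEnd ℂ) ζ.1‖ < 1 := by
      rw [RCLike.norm_conj]
      simpa [mem_ball, dist_zero_right] using hζ.1
    have hζ2 : ‖(starRingEnd ℂ) ζ.2‖ < 1 := by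
      rw [RCLike.norm_conj]
      simpa [mem_ball, dist_zero_right] using hζ.2
    have hmul_lt : ∀ u v : ℂ, ‖u‖ < 1 → ‖v‖ < 1 → ‖u * v‖ < 1 := by
      intro u v hu hv
      rw [norm_mul]
      nlinarith [norm_nonneg u, norm_nonneg v]
    have hAB := aux_prod2 (hmul_lt _ _ hz1 hζ1) (hmul_lt _ _ hz2 hζ2)
    have hCD := aux_prod2 (hmul_lt _ _ hz1 hζ2) (hmul_lt _ _ hz2 hζ1)
    have hF := hAB.sub hCD
    set F : ℕ × ℕ → ℂ := fun jk =>
      ((jk.1 + 1) * (jk.2 + 1) : ℂ) * (z.1 * (starRingEnd ℂ) ζ.1) ^ jk.1 *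
          (z.2 * (starRingEnd ℂ) ζ.2) ^ jk.2 -
        ((jk.1 + 1) * (jk.2 + 1) : ℂ) * (z.1 * (starRingEnd ℂ) ζ.2) ^ jk.1 *
          (z.2 * (starRingEnd ℂ) ζ.1) ^ jk.2 with hFdef
    have hd : ∀ n : ℕ, F (n, n) = 0 := by
      intro n
      have hpow : (z.1 * (starRingEnd ℂ) ζ.1) ^ n * (z.2 * (starRingEnd ℂ) ζ.2) ^ n =
          (z.1 * (starRingEnd ℂ) ζ.2) ^ n * (z.2 * (starRingEnd ℂ) ζ.1) ^ n := by
        rw [← mul_pow, ← mul_pow]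
        ring_nf
      simp only [hFdef]
      simp only [mul_assoc, hpow]
      ring
    have hoff := aux_offdiag hF hd
    have hab : z.1 - z.2 ≠ 0 := sub_ne_zero.mpr hz12
    have hcd : (starRingEnd ℂ) ζ.1 - (starRingEnd ℂ) ζ.2 ≠ 0 := by
      rw [← map_sub]
      exact (map_ne_zero (starRingEnd ℂ)).mpr (sub_ne_zero.mpr hζ12)
    have hmul := hoff.mul_left
      (((1 : ℂ) / ((2 * Real.pi ^ 2 : ℝ) : ℂ)) *
        (1 / ((z.1 - z.2) * (starRingEnd ℂ) (ζ.1 - ζ.2))))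
    have hfuneq : (fun jk : {q : ℕ × ℕ // q.2 < q.1} =>
        basisElt jk.1.1 jk.1.2 z * (starRingEnd ℂ) (basisElt jk.1.1 jk.1.2 ζ)) =
        fun q : {q : ℕ × ℕ // q.2 < q.1} =>
          (((1 : ℂ) / ((2 * Real.pi ^ 2 : ℝ) : ℂ)) *
            (1 / ((z.1 - z.2) * (starRingEnd ℂ) (ζ.1 - ζ.2)))) *
            (F q.1 + F (q.1.2, q.1.1)) := by
      funext q
      obtain ⟨⟨j, k⟩, hq⟩ := q
      simp only [basisElt, hFdef, map_mul, map_div₀, map_sub, map_pow, Complex.conj_ofReal,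
        map_sub]
      have := aux_pointwise j k z.1 z.2 ((starRingEnd ℂ) ζ.1) ((starRingEnd ℂ) ζ.2) hab hcd
      push_cast at this ⊢
      convert this using 2 <;> ring
    rw [hfuneq]
    convert hmul using 2
end

section
/- For m, n positive integers with gcd(m,n) = 1 and γ = m/n, the map Φ(w₁,w₂) = (w₁w₂ⁿ, w₂ᵐ) is a proper surjective holomorphic map from 𝔻 × 𝔻* onto the generalized Hartogs triangle ℍ^γ = {(z₁,z₂) ∈ ℂ² : |z₁|^γ < |z₂| < 1}. -/
open MeasureTheory Metric

/-- 𝔻 × 𝔻*, the product of the unit disk and the punctured unit disk. -/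
def diskTimesPuncturedDisk : Set (ℂ × ℂ) :=
  {w | ‖w.1‖ < 1 ∧ 0 < ‖w.2‖ ∧ ‖w.2‖ < 1}

/-- The generalized Hartogs triangle ℍ^γ = {|z₁|^γ < |z₂| < 1}. -/
def hartogsTriangle (γ : ℝ) : Set (ℂ × ℂ) :=
  {z | ‖z.1‖ ^ γ < ‖z.2‖ ∧ ‖z.2‖ < 1}

private lemma aux_rpow_cancel (x : ℝ) (hx : 0 ≤ x) {p q : ℝ} (h : p * q = 1) :
    (x ^ p) ^ q = x := by
  rw [← Real.rpow_mul hx, h, Real.rpow_one]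

private lemma aux_pow_rpow (x : ℝ) (hx : 0 ≤ x) (k : ℕ) (e : ℝ) :
    (x ^ k) ^ e = x ^ ((k : ℝ) * e) := by
  rw [← Real.rpow_natCast x k, ← Real.rpow_mul hx]

/-- For coprime positive integers m, n and γ = m/n, the map
Φ(w₁,w₂) = (w₁w₂ⁿ, w₂ᵐ) is a proper surjective holomorphic map from 𝔻 × 𝔻*
onto ℍ^γ. -/
theorem hartogs_covering (m n : ℕ) (hm : 0 < m) (hn : 0 < n)
    (hco : Nat.Coprime m n) :
    Differentiable ℂ (fun w : ℂ × ℂ => (w.1 * w.2 ^ n, w.2 ^ m)) ∧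
    Set.MapsTo (fun w : ℂ × ℂ => (w.1 * w.2 ^ n, w.2 ^ m))
      diskTimesPuncturedDisk (hartogsTriangle ((m : ℝ) / n)) ∧
    Set.SurjOn (fun w : ℂ × ℂ => (w.1 * w.2 ^ n, w.2 ^ m))
      diskTimesPuncturedDisk (hartogsTriangle ((m : ℝ) / n)) ∧
    ∀ K ⊆ hartogsTriangle ((m : ℝ) / n), IsCompact K →
      IsCompact ((fun w : ℂ × ℂ => (w.1 * w.2 ^ n, w.2 ^ m)) ⁻¹' K ∩
        diskTimesPuncturedDisk) := by
  have hmR : (0:ℝ) < m := by exact_mod_cast hm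
  have hnR : (0:ℝ) < n := by exact_mod_cast hn
  have hγ : 0 < (m : ℝ) / n := by positivity
  set γ : ℝ := (m : ℝ) / n with hγdef
  set Φ : ℂ × ℂ → ℂ × ℂ := fun w => (w.1 * w.2 ^ n, w.2 ^ m) with hΦ
  have hΦcont : Continuous Φ :=
    (continuous_fst.mul (continuous_snd.pow n)).prodMk (continuous_snd.pow m)
  -- key abs computation : (|w₁|·|w₂|ⁿ)^γ = |w₁|^γ · |w₂|^m
  have habsmul : ∀ w : ℂ × ℂ,
      (‖w.1‖ * ‖w.2‖ ^ n) ^ γ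
        = ‖w.1‖ ^ γ * ‖w.2‖ ^ m := by
    intro w
    rw [Real.mul_rpow (norm_nonneg _) (by positivity),
      aux_pow_rpow _ (norm_nonneg _)]
    congr 1
    rw [show (n : ℝ) * γ = (m : ℝ) by rw [hγdef]; field_simp [hnR.ne', hmR.ne'], Real.rpow_natCast]
  refine ⟨?_, ?_, ?_, ?_⟩
  · exact (differentiable_fst.mul (differentiable_snd.pow n)).prodMk
      (differentiable_snd.pow m)
  · rintro w ⟨h1, h2, h3⟩
    refine ⟨?_, ?_⟩
    · show (‖(w.1 * w.2 ^ n)‖) ^ γ < ‖(w.2 ^ m)‖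
      rw [norm_mul, norm_pow, norm_pow, habsmul]
      calc ‖w.1‖ ^ γ * ‖w.2‖ ^ m
          < 1 * ‖w.2‖ ^ m := by
            exact mul_lt_mul_of_pos_right
              (Real.rpow_lt_one (norm_nonneg _) h1 hγ) (pow_pos h2 m)
        _ = ‖w.2‖ ^ m := one_mul _
    · show ‖(w.2 ^ m)‖ < 1
      rw [norm_pow]
      exact pow_lt_one₀ (norm_nonneg _) h3 hm.ne'
  · rintro z ⟨h1, h2⟩
    have hz2 : z.2 ≠ 0 := by
      intro h
      rw [h] at h1
      simp only [norm_zero] at h1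
      exact absurd h1 (not_lt.2 (Real.rpow_nonneg (norm_nonneg _) _))
    set w2 : ℂ := z.2 ^ ((m : ℂ)⁻¹) with hw2def
    have hw2m : w2 ^ m = z.2 := Complex.cpow_nat_inv_pow z.2 hm.ne'
    have hw2ne : w2 ≠ 0 := by
      intro h; rw [h, zero_pow hm.ne'] at hw2m; exact hz2 hw2m.symm
    have habs : ‖w2‖ ^ m = ‖z.2‖ := by
      rw [← norm_pow, hw2m]
    have hb0 : 0 < ‖w2‖ := norm_pos_iff.mpr hw2ne
    have hb1 : ‖w2‖ < 1 := by
      by_contra h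
      push_neg at h
      have : (1:ℝ) ≤ ‖w2‖ ^ m := one_le_pow₀ h
      rw [habs] at this
      exact absurd h2 (not_lt.2 this)
    have key : ‖z.1‖ ^ m < ‖z.2‖ ^ n := by
      have h' := pow_lt_pow_left₀ h1 (Real.rpow_nonneg (norm_nonneg _) _) hn.ne'
      have e1 : (‖z.1‖ ^ γ) ^ n = ‖z.1‖ ^ m := by
        rw [← Real.rpow_natCast (‖z.1‖ ^ γ) n,
          ← Real.rpow_mul (norm_nonneg _),
          show γ * n = (m : ℝ) by rw [hγdef]; field_simp [hnR.ne', hmR.ne'], Real.rpow_natCast]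
      rwa [e1] at h'
    have hlt : ‖z.1‖ < ‖w2‖ ^ n := by
      apply lt_of_pow_lt_pow_left₀ m (pow_nonneg hb0.le n)
      calc ‖z.1‖ ^ m < ‖z.2‖ ^ n := key
        _ = (‖w2‖ ^ m) ^ n := by rw [habs]
        _ = (‖w2‖ ^ n) ^ m := by rw [← pow_mul, mul_comm, pow_mul]
    refine ⟨(z.1 / w2 ^ n, w2), ⟨?_, hb0, hb1⟩, ?_⟩
    · show ‖(z.1 / w2 ^ n)‖ < 1
      rw [norm_div, norm_pow]
      exact (div_lt_one (pow_pos hb0 n)).2 hlt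
    · show (z.1 / w2 ^ n * w2 ^ n, w2 ^ m) = z
      have : z.1 / w2 ^ n * w2 ^ n = z.1 := by
        field_simp
      rw [this, hw2m]
  · intro K hK hKc
    rcases K.eq_empty_or_nonempty with rfl | hne
    · simpa using isCompact_empty
    have hcont2 : ContinuousOn (fun z : ℂ × ℂ => ‖z.2‖) K :=
      (continuous_norm.comp continuous_snd).continuousOn
    obtain ⟨za, hzaK, hza⟩ := hKc.exists_isMinOn hne hcont2
    obtain ⟨zb, hzbK, hzb⟩ := hKc.exists_isMaxOn hne hcont2
    rw [isMinOn_iff] at hza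
    rw [isMaxOn_iff] at hzb
    set a : ℝ := ‖za.2‖ with hadef
    set b : ℝ := ‖zb.2‖ with hbdef
    have ha0 : 0 < a :=
      lt_of_le_of_lt (Real.rpow_nonneg (norm_nonneg _) _) (hK hzaK).1
    have hb1 : b < 1 := (hK hzbK).2
    have hb0 : 0 ≤ b := norm_nonneg _
    have habspos : ∀ z ∈ K, 0 < ‖z.2‖ := fun z hz =>
      lt_of_le_of_lt (Real.rpow_nonneg (norm_nonneg _) _) (hK hz).1
    have hcontg : ContinuousOn
        (fun z : ℂ × ℂ => ‖z.1‖ ^ γ / ‖z.2‖) K := by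
      apply ContinuousOn.div
      · exact ((continuous_norm.comp continuous_fst).rpow_const
          (fun x => Or.inr hγ.le)).continuousOn
      · exact hcont2
      · exact fun z hz => (habspos z hz).ne'
    obtain ⟨zc, hzcK, hzc⟩ := hKc.exists_isMaxOn hne hcontg
    rw [isMaxOn_iff] at hzc
    set c : ℝ := ‖zc.1‖ ^ γ / ‖zc.2‖ with hcdef
    have hc0 : 0 ≤ c :=
      div_nonneg (Real.rpow_nonneg (norm_nonneg _) _) (norm_nonneg _)
    have hc1 : c < 1 := (div_lt_one (habspos zc hzcK)).2 (hK hzcK).1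
    set a' : ℝ := a ^ ((m : ℝ)⁻¹) with ha'def
    set b' : ℝ := b ^ ((m : ℝ)⁻¹) with hb'def
    set c' : ℝ := c ^ ((n : ℝ) / m) with hc'def
    have ha'0 : 0 < a' := Real.rpow_pos_of_pos ha0 _
    have hb'1 : b' < 1 := Real.rpow_lt_one hb0 hb1 (by positivity)
    have hc'1 : c' < 1 := Real.rpow_lt_one hc0 hc1 (by positivity)
    set C : Set (ℂ × ℂ) :=
      closedBall (0 : ℂ) c' ×ˢ (closedBall (0 : ℂ) b' ∩ {z : ℂ | a' ≤ ‖z‖})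
      with hCdef
    have hCc : IsCompact C :=
      (isCompact_closedBall _ _).prod
        ((isCompact_closedBall _ _).inter_right
          (isClosed_le continuous_const continuous_norm))
    have hmemC : ∀ w : ℂ × ℂ, w ∈ C ↔
        (‖w.1‖ ≤ c' ∧ ‖w.2‖ ≤ b' ∧ a' ≤ ‖w.2‖) := by
      intro w
      simp [hCdef, Set.mem_prod, Complex.dist_eq, and_assoc]
    have hset : Φ ⁻¹' K ∩ diskTimesPuncturedDisk = Φ ⁻¹' K ∩ C := by
      ext w
      simp only [Set.mem_inter_iff, Set.mem_preimage, and_congr_right_iff]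
      intro hwK
      rw [hmemC]
      constructor
      · rintro ⟨h1, h2, h3⟩
        set r : ℝ := ‖w.2‖ with hrdef
        have hrm : ‖(Φ w).2‖ = r ^ m := by
          simp [hΦ, map_pow, hrdef]
        have hra : a ≤ r ^ m := by rw [← hrm]; exact hza _ hwK
        have hrb : r ^ m ≤ b := by rw [← hrm]; exact hzb _ hwK
        have hrcancel : (r ^ m : ℝ) ^ ((m : ℝ)⁻¹) = r := by
          rw [aux_pow_rpow _ h2.le, mul_inv_cancel₀ hmR.ne', Real.rpow_one]
        refine ⟨?_, ?_, ?_⟩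
        · -- |w₁| ≤ c'
          have hz1 : ‖(Φ w).1‖ ^ γ ≤ c * ‖(Φ w).2‖ := by
            have := hzc _ hwK
            rwa [div_le_iff₀ (habspos _ hwK)] at this
          have h4 : (‖w.1‖ * r ^ n) ^ γ ≤ c * r ^ m := by
            simpa [hΦ, map_mul, map_pow, hrdef] using hz1
          rw [habsmul] at h4
          have h5 : ‖w.1‖ ^ γ ≤ c :=
            le_of_mul_le_mul_right (by simpa [mul_comm] using h4) (pow_pos h2 m)
          have h6 : (‖w.1‖ ^ γ) ^ ((n : ℝ) / m) ≤ c ^ ((n : ℝ) / m) :=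
            Real.rpow_le_rpow (Real.rpow_nonneg (norm_nonneg _) _) h5
              (by positivity)
          rwa [aux_rpow_cancel _ (norm_nonneg _)
            (by rw [hγdef]; field_simp [hnR.ne', hmR.ne'])] at h6
        · rw [← hrcancel]
          exact Real.rpow_le_rpow (by positivity) hrb (by positivity)
        · rw [← hrcancel]
          exact Real.rpow_le_rpow ha0.le hra (by positivity)
      · rintro ⟨h1, h2, h3⟩
        exact ⟨lt_of_le_of_lt h1 hc'1, lt_of_lt_of_le ha'0 h3,
          lt_of_le_of_lt h2 hb'1⟩
    show IsCompact (Φ ⁻¹' K ∩ diskTimesPuncturedDisk)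
    rw [hset]
    exact hCc.inter_left (hKc.isClosed.preimage hΦcont)
end
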